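/- Let g be a nondegenerate symmetric bilinear form on a finite-dimensional real vector space V and A : V → V a g-selfadjoint endomorphism. If ρ ∈ ℝ is an eigenvalue of A whose algebraic multiplicity (as a root of the characteristic polynomial) equals 1, then every eigenvector u of A with eigenvalue ρ satisfies g(u,u) ≠ 0. -/

import Mathlib

open Polynomial

lemma matrix_charpoly_sub_smul_one {n : Type*} [DecidableEq n] [Fintype n]
    (M : Matrix n n ℝ) (ρ : ℝ) :
    (M - ρ • 1).charpoly = M.charpoly.comp (X + C ρ) := by
  rw [Matrix.charpoly, Matrix.charpoly, comp_eq_aeval, AlgHom.map_det]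
  congr 1
  ext i j
  simp only [Matrix.charmatrix, AlgHom.mapMatrix_apply, Matrix.map_apply, Matrix.sub_apply,
    RingHom.mapMatrix_apply, Matrix.scalar_apply, Matrix.diagonal_apply, Matrix.smul_apply,
    Matrix.one_apply, smul_eq_mul]
  by_cases h : i = j <;> simp [h, map_add, map_sub, aeval_X, aeval_C] <;> ring

lemma linmap_charpoly_sub_smul_one {V : Type*} [AddCommGroup V] [Module ℝ V]
    [FiniteDimensional ℝ V] (A : V →ₗ[ℝ] V) (ρ : ℝ) :
    (A - ρ • 1).charpoly = A.charpoly.comp (X + C ρ) := by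
  let b := Module.finBasis ℝ V
  rw [← LinearMap.charpoly_toMatrix A b, ← LinearMap.charpoly_toMatrix (A - ρ • 1) b]
  rw [← matrix_charpoly_sub_smul_one]
  congr 1
  simp [map_sub, map_smul]

theorem stmt_3 (V : Type*) [AddCommGroup V] [Module ℝ V] [FiniteDimensional ℝ V]
    (g : LinearMap.BilinForm ℝ V)
    (hgsymm : ∀ x y, g x y = g y x)
    (hgnd : ∀ x, (∀ y, g x y = 0) → x = 0)
    (A : V →ₗ[ℝ] V)
    (hA : ∀ x y, g (A x) y = g x (A y))
    (ρ : ℝ)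
    (hmult : (LinearMap.charpoly A).rootMultiplicity ρ = 1)
    (u : V) (hu0 : u ≠ 0) (hu : A u = ρ • u) :
    g u u ≠ 0 := by
  intro hguu
  set B : V →ₗ[ℝ] V := A - ρ • 1 with hB
  have hBu : B u = 0 := by simp [hB, hu, LinearMap.sub_apply]
  -- B is g-selfadjoint
  have hBsa : ∀ x y, g (B x) y = g x (B y) := by
    intro x y
    simp only [hB, LinearMap.sub_apply, LinearMap.smul_apply, Module.End.one_apply,
      map_sub, map_smul, LinearMap.sub_apply, LinearMap.smul_apply, smul_eq_mul]
    rw [hA]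
  -- dimension of generalized eigenspace is 1
  have hdim : Module.finrank ℝ ((Module.End.maxGenEigenspace B 0 : Submodule ℝ V)) = 1 := by
    rw [LinearMap.finrank_maxGenEigenspace_zero_eq]
    rw [Polynomial.rootMultiplicity_eq_natTrailingDegree] at hmult
    rw [← linmap_charpoly_sub_smul_one A ρ] at hmult
    exact hmult
  set K := Module.End.maxGenEigenspace B 0 with hK
  have huK : u ∈ K := by
    rw [Module.End.mem_maxGenEigenspace]
    exact ⟨1, by simp [hBu]⟩
  have hspan : Submodule.span ℝ {u} = K := by
    apply Submodule.eq_of_le_of_finrank_le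
    · exact Submodule.span_le.mpr (by simpa using huK)
    · rw [hdim, finrank_span_singleton hu0]
  have hKsup : K = ⨆ n, LinearMap.ker (B ^ n) := by
    simp [hK, ← Module.End.iSup_genEigenspace_eq, Module.End.genEigenspace_nat]
  have hcompl := LinearMap.isCompl_iSup_ker_pow_iInf_range_pow B
  have htop : (⨆ n, LinearMap.ker (B ^ n)) ⊔ (⨅ n, LinearMap.range (B ^ n)) = ⊤ :=
    hcompl.sup_eq_top
  have hu0' : u = 0 := by
    apply hgnd u
    intro y
    have hy : y ∈ (⨆ n, LinearMap.ker (B ^ n)) ⊔ (⨅ n, LinearMap.range (B ^ n)) := by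
      rw [htop]; trivial
    obtain ⟨k, hk, w, hw, rfl⟩ := Submodule.mem_sup.mp hy
    rw [← hKsup, ← hspan] at hk
    obtain ⟨c, rfl⟩ := Submodule.mem_span_singleton.mp hk
    have hw1 : w ∈ LinearMap.range (B ^ 1) := iInf_le (fun n => LinearMap.range (B ^ n)) 1 hw
    obtain ⟨x, rfl⟩ := hw1
    rw [pow_one]
    rw [map_add, map_smul, ← hBsa, hBu]
    simp [hguu]
  exact hu0 hu0'
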